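/- Let $T_K^\gamma$ be the Laplacian on $K$ nodes with edge weights $\tau^\gamma_{st} = n_s n_t \gamma$ for $s \ne t$, where $n_1 + \cdots + n_K = n$, all $n_i \ge 1$, and $\gamma > 0$. Then $\det(T_K^\gamma[K]) = \gamma^{K-1} n^{K-2} \prod_{i=1}^K n_i$, where $T_K^\gamma[K]$ denotes the matrix with the last row and column removed. -/

import Mathlib

open Matrix Finset

/-- The weighted-graph Laplacian on `Fin n` with edge weights `f`. -/
def lap {n : ℕ} (f : Fin n → Fin n → ℝ) : Matrix (Fin n) (Fin n) ℝ :=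
  Matrix.of fun s t =>
    if s = t then ∑ u ∈ Finset.univ.erase s, f s u else -(f s t)

/-- for the Laplacian `T` on `K = m+2` nodes with edge weights
`τ s t = c s * c t * γ` (where `c i ≥ 1` and `n = ∑ c i`), deleting the last row and
column gives `det (T[K]) = γ^(K-1) * n^(K-2) * ∏ c i`. -/
theorem det_supernode_laplacian_minor {m : ℕ} (γ : ℝ) (hγ : 0 < γ)
    (c : Fin (m + 2) → ℕ) (hc : ∀ i, 1 ≤ c i) :
    ((lap fun s t : Fin (m + 2) => (c s : ℝ) * (c t : ℝ) * γ).submatrix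
        Fin.castSucc Fin.castSucc).det
      = γ ^ (m + 1) * ((∑ i, c i : ℕ) : ℝ) ^ m * ∏ i, (c i : ℝ) := by
  set n : ℝ := ((∑ i, c i : ℕ) : ℝ) with hn
  have hci : ∀ i : Fin (m+2), (0:ℝ) < (c i : ℝ) := fun i => by
    exact_mod_cast Nat.lt_of_lt_of_le Nat.zero_lt_one (hc i)
  have hnpos : 0 < n := by
    rw [hn]
    exact_mod_cast Finset.sum_pos (fun i _ => Nat.lt_of_lt_of_le Nat.zero_lt_one (hc i)) univ_nonempty
  have hnne : n ≠ 0 := ne_of_gt hnpos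
  -- diagonal entries
  have hdiag : ∀ s : Fin (m+2),
      (∑ u ∈ Finset.univ.erase s, (c s : ℝ) * (c u : ℝ) * γ) = (c s : ℝ) * (n - (c s : ℝ)) * γ := by
    intro s
    have : (∑ u ∈ Finset.univ.erase s, (c u : ℝ)) = n - (c s : ℝ) := by
      rw [hn, Nat.cast_sum, ← Finset.sum_erase_add _ _ (mem_univ s)]
      ring
    rw [← Finset.sum_mul, ← Finset.mul_sum, this]
  -- express the matrix as diagonal + rank one
  set d : Fin (m+1) → ℝ := fun i => γ * n * (c i.castSucc : ℝ) with hd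
  set u : Fin (m+1) → ℝ := fun i => (c i.castSucc : ℝ) with hu
  set v : Fin (m+1) → ℝ := fun i => -(γ * (c i.castSucc : ℝ)) with hv
  have hM : (lap fun s t : Fin (m + 2) => (c s : ℝ) * (c t : ℝ) * γ).submatrix
        Fin.castSucc Fin.castSucc = diagonal d + replicateCol Unit u * replicateRow Unit v := by
    ext i j
    by_cases h : i = j
    · subst h
      simp [lap, diagonal, Matrix.mul_apply, hdiag, hd, hu, hv]
      ring
    · have h' : (i.castSucc : Fin (m+2)) ≠ j.castSucc := by
        simpa [Fin.castSucc_inj] using h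
      simp [lap, diagonal, h, h', Matrix.mul_apply, hu, hv]
      ring
  have hdpos : ∀ i, 0 < d i := fun i => by
    rw [hd]; exact mul_pos (mul_pos hγ hnpos) (hci i.castSucc)
  have hdne : ∀ i, d i ≠ 0 := fun i => ne_of_gt (hdpos i)
  have hdet : (diagonal d).det = ∏ i, d i := det_diagonal
  have hA : IsUnit (diagonal d).det := by
    rw [hdet]
    exact (Finset.prod_ne_zero_iff.mpr fun i _ => hdne i).isUnit
  have hinv : (diagonal d)⁻¹ = diagonal fun i => (d i)⁻¹ := by
    refine inv_eq_right_inv ?_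
    rw [diagonal_mul_diagonal]
    convert diagonal_one with i
    exact mul_inv_cancel₀ (hdne i)
  rw [hM, det_add_replicateCol_mul_replicateRow hA, hdet, hinv]
  have h1 : (1 + replicateRow Unit v * diagonal (fun i => (d i)⁻¹) * replicateCol Unit u).det
      = 1 + ∑ i, v i * (d i)⁻¹ * u i := by
    rw [det_unique]
    simp [Matrix.mul_apply, Matrix.add_apply, Matrix.diagonal_apply, ite_mul, mul_ite,
      zero_mul, mul_zero, Finset.sum_mul]
  rw [h1]
  have hterm : ∀ i : Fin (m+1), v i * (d i)⁻¹ * u i = -((c i.castSucc : ℝ) / n) := by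
    intro i
    rw [hv, hd, hu]
    field_simp [ne_of_gt hγ, ne_of_gt (hci i.castSucc)]
  rw [Finset.sum_congr rfl fun i _ => hterm i]
  have hS : n = (∑ i : Fin (m+1), (c i.castSucc : ℝ)) + (c (Fin.last (m+1)) : ℝ) := by
    rw [hn, Nat.cast_sum, Fin.sum_univ_castSucc]
  have h2 : 1 + ∑ i : Fin (m+1), -((c i.castSucc : ℝ) / n) = (c (Fin.last (m+1)) : ℝ) / n := by
    rw [Finset.sum_neg_distrib, ← Finset.sum_div]
    field_simp
    linarith [hS]
  rw [h2]
  have h3 : (∏ i, d i) = γ ^ (m+1) * n ^ (m+1) * ∏ i : Fin (m+1), (c i.castSucc : ℝ) := by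
    rw [hd]
    rw [Finset.prod_mul_distrib, Finset.prod_mul_distrib, Finset.prod_const, Finset.prod_const]
    simp [mul_pow]
  rw [h3]
  rw [Fin.prod_univ_castSucc (fun i => (c i : ℝ))]
  field_simp
  ring
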